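/- Let L be a language with a unary connective ¬ and binary connectives ∨ and ∧, F the set of all wffs of L, and ⟨F, 𝒱, ⊨⟩ a semantic structure satisfying (A3), (A1), and (A0). Let |~ be a relation on P(F) × F. Then |~ is a coherency preserving, universe-codefinable pivotal-discriminative consequence relation if and only if |~ satisfies conditions (|~0), (|~6), (|~7), (|~8), (|~10), (|~11), and (|~12). -/

import Mathlib

/-- The set of models of a set of formulas `Γ`. -/
def modSet {F V : Type*} (sat : V → F → Prop) (Γ : Set F) : Set V :=
  {v | ∀ α ∈ Γ, sat v α}

/-- The set of formulas satisfied in every valuation of `S`. -/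
def thSet {F V : Type*} (sat : V → F → Prop) (S : Set V) : Set F :=
  {α | S ⊆ modSet sat {α}}

/-- `D`: the family of definable sets of valuations. -/
def defFam {F V : Type*} (sat : V → F → Prop) : Set (Set V) :=
  {S | ∃ Γ : Set F, modSet sat Γ = S}

/-- The basic consequence operator `C_⊢(Γ) = Th(Mod(Γ))`. -/
def cnsq {F V : Type*} (sat : V → F → Prop) (Γ : Set F) : Set F :=
  thSet sat (modSet sat Γ)

/-- `C_|~(Γ) = {α | Γ |~ α}`. -/
def relC {F : Type*} (rel : Set F → F → Prop) (Γ : Set F) : Set F :=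
  {α | rel Γ α}

/-- `𝐂`: the sets of valuations that do not satisfy both a formula and its negation. -/
def coFam {F V : Type*} (sat : V → F → Prop) (neg : F → F) : Set (Set V) :=
  {S | ∀ α, ¬(S ⊆ modSet sat {α} ∧ S ⊆ modSet sat {neg α})}

/-- `Γ` is consistent: for no `α` do we have both `Γ ⊢ α` and `Γ ⊢ ¬α`. -/
def isConsistent {F V : Type*} (sat : V → F → Prop) (neg : F → F) (Γ : Set F) : Prop :=
  ∀ α, ¬(modSet sat Γ ⊆ modSet sat {α} ∧ modSet sat Γ ⊆ modSet sat {neg α})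

/-- One step of the inductive construction of the sets `H_i(Γ)`:
`hStep … Γ B = {¬β : β ∈ C_⊢(B) \ C_|~(Γ) and ¬β ∉ C_⊢(B)}`. -/
def hStep {F V : Type*} (sat : V → F → Prop) (neg : F → F)
    (rel : Set F → F → Prop) (Γ B : Set F) : Set F :=
  {x | ∃ β, x = neg β ∧ β ∈ cnsq sat B ∧ β ∉ relC rel Γ ∧ neg β ∉ cnsq sat B}

/-- `hPrev … Γ n = Γ ∪ C_|~(Γ) ∪ H_1(Γ) ∪ … ∪ H_n(Γ)`. -/
def hPrev {F V : Type*} (sat : V → F → Prop) (neg : F → F)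
    (rel : Set F → F → Prop) (Γ : Set F) : ℕ → Set F
  | 0 => Γ ∪ relC rel Γ
  | n + 1 => hPrev sat neg rel Γ n ∪ hStep sat neg rel Γ (hPrev sat neg rel Γ n)

/-- `H(Γ) = ⋃_{i ≥ 1} H_i(Γ)`, where `H_{n+1}(Γ) = hStep … Γ (hPrev … Γ n)`. -/
def hSet {F V : Type*} (sat : V → F → Prop) (neg : F → F)
    (rel : Set F → F → Prop) (Γ : Set F) : Set F :=
  ⋃ n : ℕ, hStep sat neg rel Γ (hPrev sat neg rel Γ n)

/-- Assumption `(A2)`. -/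
def assumpA2 {F V : Type*} (sat : V → F → Prop) (neg : F → F) : Prop :=
  ∀ (Γ : Set F) (α : F), α ∉ cnsq sat Γ → neg α ∉ cnsq sat Γ →
    ¬(modSet sat Γ ∩ modSet sat {α} ⊆ modSet sat {neg α})

/-- Assumption `(A3)`. -/
def assumpA3 {F V : Type*} (sat : V → F → Prop) (neg : F → F)
    (disj conj : F → F → F) : Prop :=
  ∀ α β : F,
    modSet sat {disj α β} = modSet sat {α} ∪ modSet sat {β} ∧
    modSet sat {conj α β} = modSet sat {α} ∩ modSet sat {β} ∧
    modSet sat {neg (neg α)} = modSet sat {α} ∧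
    modSet sat {neg (disj α β)} = modSet sat {conj (neg α) (neg β)} ∧
    modSet sat {neg (conj α β)} = modSet sat {disj (neg α) (neg β)}

/-- Condition `(|~0)`. -/
def cond0 {F V : Type*} (sat : V → F → Prop) (rel : Set F → F → Prop) : Prop :=
  ∀ Γ Δ : Set F, cnsq sat Γ = cnsq sat Δ → relC rel Γ = relC rel Δ

/-- Condition `(|~6)`. -/
def cond6 {F V : Type*} (sat : V → F → Prop) (neg : F → F)
    (rel : Set F → F → Prop) : Prop :=
  ∀ (Γ : Set F) (α β : F),
    β ∈ cnsq sat (Γ ∪ relC rel Γ) → β ∉ relC rel Γ →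
    neg α ∈ cnsq sat (Γ ∪ relC rel Γ ∪ {neg β}) → α ∉ relC rel Γ

/-- Condition `(|~7)`. -/
def cond7 {F V : Type*} (sat : V → F → Prop) (neg : F → F) (disj : F → F → F)
    (rel : Set F → F → Prop) : Prop :=
  ∀ (Γ : Set F) (α β : F),
    α ∈ cnsq sat (Γ ∪ relC rel Γ) → α ∉ relC rel Γ →
    β ∈ cnsq sat (Γ ∪ relC rel Γ ∪ {neg α}) → β ∉ relC rel Γ →
    disj α β ∉ relC rel Γ

/-- Condition `(|~8)`. -/
def cond8 {F V : Type*} (sat : V → F → Prop) (neg : F → F)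
    (rel : Set F → F → Prop) : Prop :=
  ∀ (Γ : Set F) (α : F), α ∈ relC rel Γ → neg α ∉ cnsq sat (Γ ∪ relC rel Γ)

/-- Condition `(|~9)`. -/
def cond9 {F V : Type*} (sat : V → F → Prop) (neg : F → F)
    (rel : Set F → F → Prop) : Prop :=
  ∀ Γ Δ : Set F, relC rel Γ ∪ hSet sat neg rel Γ ⊆
    cnsq sat (Δ ∪ relC rel Δ ∪ hSet sat neg rel Δ ∪ Γ)

/-- Condition `(|~10)`. -/
def cond10 {F V : Type*} (sat : V → F → Prop) (neg : F → F)
    (rel : Set F → F → Prop) : Prop :=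
  ∀ Γ : Set F, isConsistent sat neg Γ →
    isConsistent sat neg (relC rel Γ) ∧ Γ ⊆ relC rel Γ ∧
      cnsq sat (relC rel Γ) = relC rel Γ

/-- Condition `(|~11)`. -/
def cond11 {F V : Type*} (sat : V → F → Prop) (neg : F → F)
    (rel : Set F → F → Prop) : Prop :=
  ∀ Γ : Set F, cnsq sat (Γ ∪ relC rel Γ ∪ hSet sat neg rel Γ) =
    thSet sat {v ∈ modSet sat Γ | ∀ Δ : Set F, v ∈ modSet sat Δ →
      v ∈ modSet sat (relC rel Δ ∪ hSet sat neg rel Δ)}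

/-- Condition `(|~12)`. -/
def cond12 {F V : Type*} (sat : V → F → Prop) (neg : F → F)
    (rel : Set F → F → Prop) : Prop :=
  Set.univ \ {v : V | ∀ Δ : Set F, v ∈ modSet sat Δ →
    v ∈ modSet sat (relC rel Δ ∪ hSet sat neg rel Δ)} ∈ defFam sat

namespace Stmt13Aux

variable {F V : Type*} {sat : V → F → Prop} {neg : F → F} {rel : Set F → F → Prop}

lemma mem_mod1 {α : F} {v : V} : v ∈ modSet sat {α} ↔ sat v α := by
  simp [modSet]

lemma modSet_anti {Γ Δ : Set F} (h : Γ ⊆ Δ) : modSet sat Δ ⊆ modSet sat Γ :=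
  fun v hv α hα => hv α (h hα)

lemma mem_cnsq {Γ : Set F} {α : F} :
    α ∈ cnsq sat Γ ↔ modSet sat Γ ⊆ modSet sat {α} := Iff.rfl

lemma mem_thSet {S : Set V} {α : F} :
    α ∈ thSet sat S ↔ S ⊆ modSet sat {α} := Iff.rfl

lemma thSet_anti {S T : Set V} (h : S ⊆ T) : thSet sat T ⊆ thSet sat S :=
  fun _ hα => fun _ hv => hα (h hv)

lemma modSet_union (A B : Set F) :
    modSet sat (A ∪ B) = modSet sat A ∩ modSet sat B := by
  ext v; simp [modSet, or_imp, forall_and]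

lemma modSet_iUnion (A : ℕ → Set F) :
    modSet sat (⋃ n, A n) = ⋂ n, modSet sat (A n) := by
  ext v; simp [modSet]; tauto

lemma modSet_cnsq (Γ : Set F) : modSet sat (cnsq sat Γ) = modSet sat Γ := by
  apply subset_antisymm
  · intro v hv α hα
    have : α ∈ cnsq sat Γ := fun w hw => mem_mod1.2 (hw α hα)
    exact hv α this
  · intro v hv α hα
    exact mem_mod1.1 (hα hv)

lemma mem_relC {Γ : Set F} {α : F} : α ∈ relC rel Γ ↔ rel Γ α := Iff.rfl

lemma hPrev_le {Γ : Set F} {m n : ℕ} (h : m ≤ n) :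
    hPrev sat neg rel Γ m ⊆ hPrev sat neg rel Γ n := by
  induction n with
  | zero => simp_all
  | succ n ih =>
    rcases Nat.lt_or_ge m (n+1) with h' | h'
    · exact (ih (Nat.lt_succ_iff.1 h')).trans Set.subset_union_left
    · have : m = n + 1 := le_antisymm h h'
      subst this; rfl

lemma union_hPrev (Γ : Set F) :
    Γ ∪ relC rel Γ ∪ hSet sat neg rel Γ = ⋃ n, hPrev sat neg rel Γ n := by
  apply subset_antisymm
  · intro x hx
    rcases hx with hx | hx
    · exact Set.mem_iUnion.2 ⟨0, hx⟩
    · rcases Set.mem_iUnion.1 hx with ⟨n, hn⟩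
      exact Set.mem_iUnion.2 ⟨n+1, Or.inr hn⟩
  · intro x hx
    rcases Set.mem_iUnion.1 hx with ⟨n, hn⟩
    clear hx
    induction n with
    | zero => exact Or.inl hn
    | succ n ih =>
      rcases hn with hn | hn
      · exact ih hn
      · exact Or.inr (Set.mem_iUnion.2 ⟨n, hn⟩)

lemma modSet_total (Γ : Set F) :
    modSet sat (Γ ∪ relC rel Γ ∪ hSet sat neg rel Γ) =
      ⋂ n, modSet sat (hPrev sat neg rel Γ n) := by
  rw [union_hPrev, modSet_iUnion]

lemma hStep_congr {Γ B₁ B₂ : Set F} (h : cnsq sat B₁ = cnsq sat B₂) :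
    hStep sat neg rel Γ B₁ = hStep sat neg rel Γ B₂ := by
  unfold hStep; rw [h]

lemma cnsq_congr {B₁ B₂ : Set F} (h : modSet sat B₁ = modSet sat B₂) :
    cnsq sat B₁ = cnsq sat B₂ := by
  unfold cnsq; rw [h]

/-- Stabilization of the `hPrev` chain. -/
lemma exists_stable [Finite V] (Γ : Set F) :
    ∃ N, ∀ k, N ≤ k →
      modSet sat (hPrev sat neg rel Γ k) = modSet sat (hPrev sat neg rel Γ N) := by
  have hanti : ∀ n, modSet sat (hPrev sat neg rel Γ (n+1)) ⊆
      modSet sat (hPrev sat neg rel Γ n) :=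
    fun n => modSet_anti Set.subset_union_left
  have hex : ∃ N, modSet sat (hPrev sat neg rel Γ (N+1)) =
      modSet sat (hPrev sat neg rel Γ N) := by
    by_contra h
    push_neg at h
    have hs : StrictAnti (fun n => modSet sat (hPrev sat neg rel Γ n)) := by
      apply strictAnti_nat_of_succ_lt
      intro n
      exact lt_of_le_of_ne (hanti n) (h n)
    exact Set.not_infinite.2 (Set.toFinite _) (Set.infinite_range_of_injective hs.injective)
  obtain ⟨N, hN⟩ := hex
  -- the `hPrev` sets are literally constant from N+1 on
  have hconst : ∀ k, hPrev sat neg rel Γ (N+1+k) = hPrev sat neg rel Γ (N+1) := by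
    intro k
    induction k with
    | zero => rfl
    | succ k ih =>
      have : N + 1 + (k+1) = (N+1+k) + 1 := rfl
      rw [this]
      show hPrev sat neg rel Γ (N+1+k) ∪ _ = _
      rw [ih]
      have hstep : hStep sat neg rel Γ (hPrev sat neg rel Γ (N+1)) =
          hStep sat neg rel Γ (hPrev sat neg rel Γ N) :=
        hStep_congr (cnsq_congr hN)
      rw [hstep]
      exact Set.union_eq_self_of_subset_right Set.subset_union_right
  refine ⟨N+1, ?_⟩
  intro k hk
  obtain ⟨j, rfl⟩ := Nat.exists_eq_add_of_le hk
  rw [hconst j]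

lemma iInter_eq_of_stable {Γ : Set F} {N : ℕ}
    (hstab : ∀ k, N ≤ k →
      modSet sat (hPrev sat neg rel Γ k) = modSet sat (hPrev sat neg rel Γ N)) :
    (⋂ n, modSet sat (hPrev sat neg rel Γ n)) = modSet sat (hPrev sat neg rel Γ N) := by
  apply subset_antisymm
  · exact Set.iInter_subset _ N
  · intro v hv
    apply Set.mem_iInter.2
    intro n
    rcases Nat.le_total n N with h | h
    · exact modSet_anti (hPrev_le h) hv
    · rw [hstab n h]; exact hv

/-- Fixpoint property at a stable index. -/
lemma fixpoint {Γ : Set F} {N : ℕ}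
    (hstab : modSet sat (hPrev sat neg rel Γ (N+1)) = modSet sat (hPrev sat neg rel Γ N))
    {β : F} (h1 : modSet sat (hPrev sat neg rel Γ N) ⊆ modSet sat {β})
    (h2 : ¬ rel Γ β) :
    modSet sat (hPrev sat neg rel Γ N) ⊆ modSet sat {neg β} := by
  by_contra h
  have hmem : neg β ∈ hStep sat neg rel Γ (hPrev sat neg rel Γ N) :=
    ⟨β, rfl, h1, h2, h⟩
  have : modSet sat (hPrev sat neg rel Γ (N+1)) ⊆ modSet sat {neg β} := by
    intro v hv
    exact mem_mod1.2 (hv _ (Or.inr hmem))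
  rw [hstab] at this
  exact h this

end Stmt13Aux
namespace Stmt13Aux

section Forward

variable {F V : Type*} {sat : V → F → Prop} {neg : F → F} {disj conj : F → F → F}
  {rel : Set F → F → Prop} {M : Set V}

/-- representation of `rel` via intersection with `M` -/
def repr' (sat : V → F → Prop) (neg : F → F) (rel : Set F → F → Prop) (M : Set V) : Prop :=
  ∀ (Γ : Set F) (α : F), rel Γ α ↔
    (modSet sat Γ ∩ M ⊆ modSet sat {α} ∧ ¬ modSet sat Γ ∩ M ⊆ modSet sat {neg α})

lemma msub (hrel : repr' sat neg rel M) (Γ : Set F) :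
    ∀ n, modSet sat Γ ∩ M ⊆ modSet sat (hPrev sat neg rel Γ n) := by
  intro n
  induction n with
  | zero =>
    intro v hv
    rintro x (hx | hx)
    · exact hv.1 x hx
    · exact mem_mod1.1 (((hrel Γ x).1 hx).1 hv)
  | succ n ih =>
    intro v hv
    rintro x (hx | hx)
    · exact ih hv x hx
    · obtain ⟨β, rfl, hβ1, hβ2, _⟩ := hx
      -- β ∈ cnsq of hPrev n, so Γ∩M ⊆ Mod β; β ∉ relC so Γ∩M ⊆ Mod ¬β
      have h1 : modSet sat Γ ∩ M ⊆ modSet sat {β} := (ih.trans hβ1)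
      have h2 : modSet sat Γ ∩ M ⊆ modSet sat {neg β} := by
        by_contra h
        exact hβ2 ((hrel Γ β).2 ⟨h1, h⟩)
      exact mem_mod1.1 (h2 hv)

lemma key (hA3 : assumpA3 sat neg disj conj) (hA1 : Finite V)
    (hrel : repr' sat neg rel M)
    (hCP : ∀ B : Set F, modSet sat B ∈ coFam sat neg →
      modSet sat B ∩ M ∈ coFam sat neg)
    (Γ : Set F) :
    cnsq sat (Γ ∪ relC rel Γ ∪ hSet sat neg rel Γ) =
      thSet sat (modSet sat Γ ∩ M) := by
  obtain ⟨N, hstab⟩ := exists_stable (sat := sat) (neg := neg) (rel := rel) Γ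
  have hstabN : modSet sat (hPrev sat neg rel Γ (N+1)) =
      modSet sat (hPrev sat neg rel Γ N) := hstab (N+1) (Nat.le_succ N)
  set S := modSet sat (hPrev sat neg rel Γ N) with hS
  set m := modSet sat Γ ∩ M with hmdef
  have hSeq : modSet sat (Γ ∪ relC rel Γ ∪ hSet sat neg rel Γ) = S := by
    rw [modSet_total, iInter_eq_of_stable hstab]
  have hm : m ⊆ S := msub hrel Γ N
  have hS0 : S ⊆ modSet sat (hPrev sat neg rel Γ 0) := modSet_anti (hPrev_le (Nat.zero_le N))
  have hSΓ : S ⊆ modSet sat Γ := fun v hv => fun x hx => hS0 hv x (Or.inl hx)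
  show thSet sat (modSet sat _) = _
  rw [hSeq]
  apply subset_antisymm
  · exact thSet_anti hm
  · intro β₀ hβ₀
    rw [mem_thSet] at hβ₀ ⊢
    by_cases hr : rel Γ β₀
    · intro v hv
      exact mem_mod1.2 (hS0 hv β₀ (Or.inr hr))
    · have hnegβ₀ : m ⊆ modSet sat {neg β₀} := by
        by_contra h
        exact hr ((hrel Γ β₀).2 ⟨hβ₀, h⟩)
      by_cases hc : ∃ φ, S ⊆ modSet sat {φ} ∧ m ⊆ modSet sat {neg φ}
      · obtain ⟨φ, h1, h2⟩ := hc
        have hd1 : S ⊆ modSet sat {disj β₀ φ} := by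
          rw [(hA3 β₀ φ).1]
          exact h1.trans Set.subset_union_right
        have hmd : m ⊆ modSet sat {neg (disj β₀ φ)} := by
          rw [(hA3 β₀ φ).2.2.2.1, (hA3 (neg β₀) (neg φ)).2.1]
          exact Set.subset_inter hnegβ₀ h2
        have hdnr : ¬ rel Γ (disj β₀ φ) := by
          intro hcon
          exact ((hrel Γ (disj β₀ φ)).1 hcon).2 hmd
        have hfix := fixpoint hstabN hd1 hdnr
        have hSnb : S ⊆ modSet sat {neg β₀} := by
          rw [(hA3 β₀ φ).2.2.2.1, (hA3 (neg β₀) (neg φ)).2.1] at hfix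
          exact hfix.trans Set.inter_subset_left
        have hnr2 : ¬ rel Γ (neg β₀) := by
          intro hcon
          have : m ⊆ modSet sat {neg (neg β₀)} := by
            rw [(hA3 β₀ β₀).2.2.1]
            exact hβ₀
          exact ((hrel Γ (neg β₀)).1 hcon).2 this
        have := fixpoint hstabN hSnb hnr2
        rwa [(hA3 β₀ β₀).2.2.1] at this
      · push_neg at hc
        have hSco : modSet sat (hPrev sat neg rel Γ N) ∈ coFam sat neg := by
          rintro α ⟨ha, hb⟩
          exact hc α ha (hm.trans hb)
        have hSM := hCP _ hSco
        have hSMeq : modSet sat (hPrev sat neg rel Γ N) ∩ M = m := by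
          apply subset_antisymm
          · exact Set.inter_subset_inter_left M hSΓ
          · exact Set.subset_inter hm Set.inter_subset_right
        rw [hSMeq] at hSM
        exact absurd ⟨hβ₀, hnegβ₀⟩ (hSM β₀)

lemma Xeq (hA3 : assumpA3 sat neg disj conj) (hA1 : Finite V)
    (hA0 : modSet sat (Set.univ : Set F) = ∅)
    (hrel : repr' sat neg rel M)
    (hCP : ∀ B : Set F, modSet sat B ∈ coFam sat neg →
      modSet sat B ∩ M ∈ coFam sat neg)
    (hUC : ∃ Γ₀ : Set F, modSet sat Γ₀ = Set.univ \ M) :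
    {v : V | ∀ Δ : Set F, v ∈ modSet sat Δ →
      v ∈ modSet sat (relC rel Δ ∪ hSet sat neg rel Δ)} = M := by
  apply subset_antisymm
  · intro v hv
    by_contra hvM
    obtain ⟨Γ₀, hΓ₀⟩ := hUC
    have hv0 : v ∈ modSet sat Γ₀ := by rw [hΓ₀]; exact ⟨trivial, hvM⟩
    have hv1 := hv Γ₀ hv0
    have hv2 : v ∈ modSet sat (Γ₀ ∪ relC rel Γ₀ ∪ hSet sat neg rel Γ₀) := by
      rintro x ((hx | hx) | hx)
      · exact hv0 x hx
      · exact hv1 x (Or.inl hx)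
      · exact hv1 x (Or.inr hx)
    have hkey := key hA3 hA1 hrel hCP Γ₀
    have hmempty : modSet sat Γ₀ ∩ M = ∅ := by
      rw [hΓ₀]; ext w; simp
    have hall : ∀ α : F, sat v α := by
      intro α
      have : α ∈ cnsq sat (Γ₀ ∪ relC rel Γ₀ ∪ hSet sat neg rel Γ₀) := by
        rw [hkey, hmempty]
        intro w hw
        exact absurd hw (Set.notMem_empty w)
      exact mem_mod1.1 (this hv2)
    have : v ∈ modSet sat (Set.univ : Set F) := fun α _ => hall α
    rw [hA0] at this
    exact this
  · intro v hv Δ hΔ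
    have : v ∈ modSet sat Δ ∩ M := ⟨hΔ, hv⟩
    have h2 : ∀ n, v ∈ modSet sat (hPrev sat neg rel Δ n) := fun n => msub hrel Δ n this
    rintro x (hx | hx)
    · exact h2 0 x (Or.inr hx)
    · obtain ⟨n, hn⟩ := Set.mem_iUnion.1 hx
      exact h2 (n+1) x (Or.inr hn)

end Forward

end Stmt13Aux
namespace Stmt13Aux

section Forward2

variable {F V : Type*} {sat : V → F → Prop} {neg : F → F} {disj conj : F → F → F}
  {rel : Set F → F → Prop} {M : Set V}

lemma hPrev_zero (Γ : Set F) : hPrev sat neg rel Γ 0 = Γ ∪ relC rel Γ := rfl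

lemma forward_dir (hA3 : assumpA3 sat neg disj conj) (hA1 : Finite V)
    (hA0 : modSet sat (Set.univ : Set F) = ∅)
    (hrel : repr' sat neg rel M)
    (hCP : ∀ B : Set F, modSet sat B ∈ coFam sat neg →
      modSet sat B ∩ M ∈ coFam sat neg)
    (hUC : ∃ Γ₀ : Set F, modSet sat Γ₀ = Set.univ \ M) :
    cond0 sat rel ∧ cond6 sat neg rel ∧ cond7 sat neg disj rel ∧
      cond8 sat neg rel ∧ cond10 sat neg rel ∧ cond11 sat neg rel ∧
      cond12 sat neg rel := by
  have hm0 : ∀ Γ : Set F, modSet sat Γ ∩ M ⊆ modSet sat (Γ ∪ relC rel Γ) :=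
    fun Γ => hPrev_zero (sat := sat) (neg := neg) (rel := rel) Γ ▸ msub hrel Γ 0
  refine ⟨?_, ?_, ?_, ?_, ?_, ?_, ?_⟩
  · -- cond0
    intro Γ Δ h
    have hmod : modSet sat Γ = modSet sat Δ := by
      rw [← modSet_cnsq Γ, h, modSet_cnsq]
    ext α
    rw [mem_relC, mem_relC, hrel Γ α, hrel Δ α, hmod]
  · -- cond6
    intro Γ α β hβ hβn hα hcon
    have h1 : modSet sat Γ ∩ M ⊆ modSet sat {β} := (hm0 Γ).trans hβ
    have h2 : modSet sat Γ ∩ M ⊆ modSet sat {neg β} := by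
      by_contra h
      exact hβn ((hrel Γ β).2 ⟨h1, h⟩)
    have h3 : modSet sat Γ ∩ M ⊆ modSet sat (Γ ∪ relC rel Γ ∪ {neg β}) := by
      rw [modSet_union]
      exact Set.subset_inter (hm0 Γ) h2
    exact ((hrel Γ α).1 hcon).2 (h3.trans hα)
  · -- cond7
    intro Γ α β hα hαn hβ hβn hcon
    have h1 : modSet sat Γ ∩ M ⊆ modSet sat {α} := (hm0 Γ).trans hα
    have h2 : modSet sat Γ ∩ M ⊆ modSet sat {neg α} := by
      by_contra h
      exact hαn ((hrel Γ α).2 ⟨h1, h⟩)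
    have h3 : modSet sat Γ ∩ M ⊆ modSet sat {β} := by
      have : modSet sat Γ ∩ M ⊆ modSet sat (Γ ∪ relC rel Γ ∪ {neg α}) := by
        rw [modSet_union]
        exact Set.subset_inter (hm0 Γ) h2
      exact this.trans hβ
    have h4 : modSet sat Γ ∩ M ⊆ modSet sat {neg β} := by
      by_contra h
      exact hβn ((hrel Γ β).2 ⟨h3, h⟩)
    have h5 : modSet sat Γ ∩ M ⊆ modSet sat {neg (disj α β)} := by
      rw [(hA3 α β).2.2.2.1, (hA3 (neg α) (neg β)).2.1]
      exact Set.subset_inter h2 h4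
    exact ((hrel Γ (disj α β)).1 hcon).2 h5
  · -- cond8
    intro Γ α hα hcon
    exact ((hrel Γ α).1 hα).2 ((hm0 Γ).trans hcon)
  · -- cond10
    intro Γ hcons
    have hmco : modSet sat Γ ∩ M ∈ coFam sat neg := hCP Γ hcons
    have hmC : modSet sat Γ ∩ M ⊆ modSet sat (relC rel Γ) := by
      intro v hv x hx
      exact mem_mod1.1 (((hrel Γ x).1 hx).1 hv)
    refine ⟨?_, ?_, ?_⟩
    · rintro α ⟨h1, h2⟩
      exact hmco α ⟨hmC.trans h1, hmC.trans h2⟩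
    · intro α hαΓ
      have h1 : modSet sat Γ ∩ M ⊆ modSet sat {α} := by
        intro v hv
        exact mem_mod1.2 (hv.1 α hαΓ)
      exact (hrel Γ α).2 ⟨h1, fun h2 => hmco α ⟨h1, h2⟩⟩
    · ext α
      constructor
      · intro hα
        exact (hrel Γ α).2 ⟨hmC.trans hα, fun h2 => hmco α ⟨hmC.trans hα, h2⟩⟩
      · intro hα
        intro v hv
        exact mem_mod1.2 (hv α hα)
  · -- cond11
    intro Γ
    have hX := Xeq hA3 hA1 hA0 hrel hCP hUC
    have hsep : {v ∈ modSet sat Γ | ∀ Δ : Set F, v ∈ modSet sat Δ →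
        v ∈ modSet sat (relC rel Δ ∪ hSet sat neg rel Δ)} = modSet sat Γ ∩ M := by
      rw [← hX]
      ext v
      exact ⟨fun ⟨h1, h2⟩ => ⟨h1, h2⟩, fun ⟨h1, h2⟩ => ⟨h1, h2⟩⟩
    rw [hsep]
    exact key hA3 hA1 hrel hCP Γ
  · -- cond12
    have hX := Xeq hA3 hA1 hA0 hrel hCP hUC
    obtain ⟨Γ₀, hΓ₀⟩ := hUC
    exact ⟨Γ₀, by rw [hΓ₀, hX]⟩

end Forward2

end Stmt13Aux
namespace Stmt13Aux

section Backward

variable {F V : Type*} {sat : V → F → Prop} {neg : F → F} {disj conj : F → F → F}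
  {rel : Set F → F → Prop}

lemma modSet_hStep (Γ B : Set F) :
    modSet sat (hStep sat neg rel Γ B) =
      ⋂₀ ((fun β => modSet sat {neg β}) ''
        {β | β ∈ cnsq sat B ∧ β ∉ relC rel Γ ∧ neg β ∉ cnsq sat B}) := by
  ext v
  constructor
  · intro hv s hs
    obtain ⟨β, hβ, rfl⟩ := hs
    exact mem_mod1.2 (hv (neg β) ⟨β, rfl, hβ.1, hβ.2.1, hβ.2.2⟩)
  · rintro hv x ⟨β, rfl, h1, h2, h3⟩
    exact mem_mod1.1 (hv _ ⟨β, ⟨h1, h2, h3⟩, rfl⟩)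

/-- main combination step, by induction on the finite family `𝒯`. -/
lemma combine (hA3 : assumpA3 sat neg disj conj) (h7 : cond7 sat neg disj rel)
    (Γ : Set F) (T : Set V)
    (hT : T = modSet sat (Γ ∪ relC rel Γ) ∨
      ∃ δ, modSet sat (Γ ∪ relC rel Γ) ⊆ modSet sat {δ} ∧ ¬ rel Γ δ ∧
        T = modSet sat (Γ ∪ relC rel Γ) ∩ modSet sat {neg δ})
    (E : Set F) (hE : ∀ β ∈ E, T ⊆ modSet sat {β} ∧ ¬ rel Γ β)
    (𝒯 : Set (Set V)) (h𝒯 : 𝒯.Finite)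
    (hsub : 𝒯 ⊆ (fun β => modSet sat {neg β}) '' E) :
    (T ∩ ⋂₀ 𝒯 = modSet sat (Γ ∪ relC rel Γ) ∨
        ∃ δ', modSet sat (Γ ∪ relC rel Γ) ⊆ modSet sat {δ'} ∧ ¬ rel Γ δ' ∧
          T ∩ ⋂₀ 𝒯 = modSet sat (Γ ∪ relC rel Γ) ∩ modSet sat {neg δ'}) := by
  set S0 := modSet sat (Γ ∪ relC rel Γ) with hS0
  have hTsub : T ⊆ S0 := by
    rcases hT with h | ⟨δ, _, _, h⟩
    · exact h.le
    · rw [h]; exact Set.inter_subset_left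
  refine Set.Finite.induction_on_subset (motive := fun 𝒯 _ => T ∩ ⋂₀ 𝒯 = S0 ∨
      ∃ δ', S0 ⊆ modSet sat {δ'} ∧ ¬ rel Γ δ' ∧ T ∩ ⋂₀ 𝒯 = S0 ∩ modSet sat {neg δ'}) 𝒯 h𝒯 ?_ ?_
  · simpa using hT
  · rintro s 𝒯' hs𝒯 - - ih
    obtain ⟨β, hβE, hsβ⟩ := hsub hs𝒯
    have hins : T ∩ ⋂₀ insert s 𝒯' = (T ∩ ⋂₀ 𝒯') ∩ s := by
      rw [Set.sInter_insert]
      ext v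
      constructor
      · rintro ⟨h1, h2, h3⟩; exact ⟨⟨h1, h3⟩, h2⟩
      · rintro ⟨⟨h1, h3⟩, h2⟩; exact ⟨h1, h2, h3⟩
    rcases ih with hcase | ⟨δ', hδ'1, hδ'2, hδ'3⟩
    · -- T ∩ ⋂₀ 𝒯' = S0
      right
      refine ⟨β, ?_, (hE β hβE).2, ?_⟩
      · have : S0 ⊆ T := by rw [← hcase]; exact Set.inter_subset_left
        exact this.trans (hE β hβE).1
      · rw [hins, hcase, ← hsβ]
    · -- T ∩ ⋂₀ 𝒯' = S0 ∩ Mod1 (neg δ')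
      right
      refine ⟨disj δ' β, ?_, ?_, ?_⟩
      · rw [(hA3 δ' β).1]
        exact hδ'1.trans Set.subset_union_left
      · refine h7 Γ δ' β hδ'1 hδ'2 ?_ (hE β hβE).2
        rw [mem_cnsq, modSet_union]
        rw [← hδ'3]
        exact Set.inter_subset_left.trans (hE β hβE).1
      · rw [hins, hδ'3, ← hsβ]
        rw [(hA3 δ' β).2.2.2.1, (hA3 (neg δ') (neg β)).2.1, Set.inter_assoc]

lemma exists_delta (hA3 : assumpA3 sat neg disj conj) (hA1 : Finite V)
    (h7 : cond7 sat neg disj rel) (Γ : Set F) (n : ℕ) :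
    modSet sat (hPrev sat neg rel Γ n) = modSet sat (Γ ∪ relC rel Γ) ∨
      ∃ δ, modSet sat (Γ ∪ relC rel Γ) ⊆ modSet sat {δ} ∧ ¬ rel Γ δ ∧
        modSet sat (hPrev sat neg rel Γ n) =
          modSet sat (Γ ∪ relC rel Γ) ∩ modSet sat {neg δ} := by
  induction n with
  | zero => exact Or.inl rfl
  | succ n ih =>
    have hstep : modSet sat (hPrev sat neg rel Γ (n+1)) =
        modSet sat (hPrev sat neg rel Γ n) ∩
          modSet sat (hStep sat neg rel Γ (hPrev sat neg rel Γ n)) := by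
      show modSet sat (_ ∪ _) = _
      rw [modSet_union]
    set E : Set F := {β | β ∈ cnsq sat (hPrev sat neg rel Γ n) ∧ β ∉ relC rel Γ ∧
      neg β ∉ cnsq sat (hPrev sat neg rel Γ n)} with hE
    have hE' : ∀ β ∈ E, modSet sat (hPrev sat neg rel Γ n) ⊆ modSet sat {β} ∧
        ¬ rel Γ β := fun β hβ => ⟨hβ.1, hβ.2.1⟩
    have := combine hA3 h7 Γ (modSet sat (hPrev sat neg rel Γ n)) ih E hE'
      ((fun β => modSet sat {neg β}) '' E) (Set.toFinite _) subset_rfl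
    rw [hstep, modSet_hStep]
    exact this

end Backward

end Stmt13Aux
namespace Stmt13Aux

section Backward2

variable {F V : Type*} {sat : V → F → Prop} {neg : F → F} {disj conj : F → F → F}
  {rel : Set F → F → Prop}

/-- Key representation lemma for the backward direction. -/
lemma backrep (hA3 : assumpA3 sat neg disj conj) (hA1 : Finite V)
    (h6 : cond6 sat neg rel) (h7 : cond7 sat neg disj rel) (h8 : cond8 sat neg rel)
    (Γ : Set F) (α : F) :
    rel Γ α ↔
      (α ∈ cnsq sat (Γ ∪ relC rel Γ ∪ hSet sat neg rel Γ) ∧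
        neg α ∉ cnsq sat (Γ ∪ relC rel Γ ∪ hSet sat neg rel Γ)) := by
  obtain ⟨N, hstab⟩ := exists_stable (sat := sat) (neg := neg) (rel := rel) Γ
  have hstabN : modSet sat (hPrev sat neg rel Γ (N+1)) =
      modSet sat (hPrev sat neg rel Γ N) := hstab (N+1) (Nat.le_succ N)
  have hSeq : modSet sat (Γ ∪ relC rel Γ ∪ hSet sat neg rel Γ) =
      modSet sat (hPrev sat neg rel Γ N) := by
    rw [modSet_total, iInter_eq_of_stable hstab]
  have hmem : ∀ x : F, x ∈ cnsq sat (Γ ∪ relC rel Γ ∪ hSet sat neg rel Γ) ↔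
      modSet sat (hPrev sat neg rel Γ N) ⊆ modSet sat {x} := by
    intro x
    rw [mem_cnsq, hSeq]
  constructor
  · intro hr
    refine ⟨?_, ?_⟩
    · rw [hmem]
      intro v hv
      have : v ∈ modSet sat (hPrev sat neg rel Γ 0) :=
        modSet_anti (hPrev_le (Nat.zero_le N)) hv
      exact mem_mod1.2 (this α (Or.inr hr))
    · rw [hmem]
      intro hcon
      rcases exists_delta hA3 hA1 h7 Γ N with hcase | ⟨δ, hδ1, hδ2, hδ3⟩
      · rw [hcase] at hcon
        exact h8 Γ α hr hcon
      · rw [hδ3] at hcon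
        have hn : neg α ∈ cnsq sat (Γ ∪ relC rel Γ ∪ {neg δ}) := by
          rw [mem_cnsq, modSet_union]
          exact hcon
        exact h6 Γ α δ hδ1 hδ2 hn hr
  · rintro ⟨h1, h2⟩
    rw [hmem] at h1
    by_contra hnr
    apply h2
    rw [hmem]
    exact fixpoint hstabN h1 hnr

/-- In the consistent case the whole construction collapses to `relC`. -/
lemma union_eq_relC (hsub : Γ ⊆ relC rel Γ)
    (hcl : cnsq sat (relC rel Γ) = relC rel Γ) :
    Γ ∪ relC rel Γ ∪ hSet sat neg rel Γ = relC rel Γ := by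
  have hun : Γ ∪ relC rel Γ = relC rel Γ := Set.union_eq_self_of_subset_left hsub
  have hstep0 : hStep sat neg rel Γ (hPrev sat neg rel Γ 0) = ∅ := by
    ext x
    simp only [Set.mem_empty_iff_false, iff_false]
    rintro ⟨β, rfl, hβ1, hβ2, hβ3⟩
    apply hβ2
    rw [mem_relC]
    have : β ∈ cnsq sat (relC rel Γ) := by
      rw [show hPrev sat neg rel Γ 0 = Γ ∪ relC rel Γ from rfl, hun] at hβ1
      exact hβ1
    rw [hcl] at this
    exact this
  have hconst : ∀ n, hPrev sat neg rel Γ n = hPrev sat neg rel Γ 0 := by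
    intro n
    induction n with
    | zero => rfl
    | succ n ih =>
      show hPrev sat neg rel Γ n ∪ hStep sat neg rel Γ (hPrev sat neg rel Γ n) = _
      rw [ih, hstep0, Set.union_empty]
  have hSempty : hSet sat neg rel Γ = ∅ := by
    ext x
    simp only [hSet, Set.mem_iUnion, Set.mem_empty_iff_false, iff_false]
    rintro ⟨n, hn⟩
    rw [hconst n, hstep0] at hn
    exact hn
  rw [hSempty, Set.union_empty, hun]

lemma backward_dir (hA3 : assumpA3 sat neg disj conj) (hA1 : Finite V)
    (hA0 : modSet sat (Set.univ : Set F) = ∅)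
    (h6 : cond6 sat neg rel) (h7 : cond7 sat neg disj rel) (h8 : cond8 sat neg rel)
    (h10 : cond10 sat neg rel) (h11 : cond11 sat neg rel) (h12 : cond12 sat neg rel) :
    ∃ μ : Set V → Set V,
        (∀ A ∈ defFam sat, μ A ⊆ A) ∧
        (∀ A ∈ defFam sat, ∀ B ∈ defFam sat, μ B ∩ A ⊆ μ A) ∧
        (∀ A ∈ defFam sat, A ∈ coFam sat neg → μ A ∈ coFam sat neg) ∧
        Set.univ \ μ Set.univ ∈ defFam sat ∧
        (∀ (Γ : Set F) (α : F), rel Γ α ↔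
          (μ (modSet sat Γ) ⊆ modSet sat {α} ∧
            ¬ μ (modSet sat Γ) ⊆ modSet sat {neg α})) := by
  set X : Set V := {v : V | ∀ Δ : Set F, v ∈ modSet sat Δ →
    v ∈ modSet sat (relC rel Δ ∪ hSet sat neg rel Δ)} with hX
  have hsep : ∀ Γ : Set F, {v ∈ modSet sat Γ | ∀ Δ : Set F, v ∈ modSet sat Δ →
      v ∈ modSet sat (relC rel Δ ∪ hSet sat neg rel Δ)} = modSet sat Γ ∩ X := by
    intro Γ; rfl
  have hth : ∀ Γ : Set F, thSet sat (modSet sat Γ ∩ X) =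
      cnsq sat (Γ ∪ relC rel Γ ∪ hSet sat neg rel Γ) := by
    intro Γ
    rw [h11 Γ, hsep Γ]
  refine ⟨fun A => A ∩ X, ?_, ?_, ?_, ?_, ?_⟩
  · intro A _
    exact Set.inter_subset_left
  · rintro A _ B _ v ⟨⟨_, hx⟩, ha⟩
    exact ⟨ha, hx⟩
  · rintro A ⟨Γ, rfl⟩ hco
    obtain ⟨hrc, hsub, hcl⟩ := h10 Γ hco
    have hun := union_eq_relC (sat := sat) (neg := neg) hsub hcl
    have hth' := hth Γ
    rw [hun] at hth'
    rintro α ⟨ha, hb⟩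
    have hα : α ∈ cnsq sat (relC rel Γ) := by rw [← hth']; exact ha
    have hnα : neg α ∈ cnsq sat (relC rel Γ) := by rw [← hth']; exact hb
    rw [hcl] at hα hnα
    refine hrc α ⟨?_, ?_⟩
    · intro v hv; exact mem_mod1.2 (hv α hα)
    · intro v hv; exact mem_mod1.2 (hv (neg α) hnα)
  · show Set.univ \ (Set.univ ∩ X) ∈ defFam sat
    rw [Set.univ_inter]
    exact h12
  · intro Γ α
    rw [backrep hA3 hA1 h6 h7 h8 Γ α]
    constructor
    · rintro ⟨h1, h2⟩
      refine ⟨?_, ?_⟩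
      · rw [show (fun A => A ∩ X) (modSet sat Γ) = modSet sat Γ ∩ X from rfl]
        intro v hv
        exact (hth Γ ▸ h1 : α ∈ thSet sat (modSet sat Γ ∩ X)) hv
      · intro hcon
        apply h2
        rw [← hth Γ]
        exact hcon
    · rintro ⟨h1, h2⟩
      refine ⟨?_, ?_⟩
      · rw [← hth Γ] at *
        exact h1
      · intro hcon
        apply h2
        rw [← hth Γ] at hcon
        exact hcon

end Backward2

end Stmt13Aux
/-- Under `(A3)`, `(A1)`, and `(A0)`, `|~` is a coherency preserving,
universe-codefinable pivotal-discriminative consequence relation iff it satisfies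
`(|~0)`, `(|~6)`, `(|~7)`, `(|~8)`, `(|~10)`, `(|~11)`, and `(|~12)`. -/
theorem stmt13 {F V : Type*} (neg : F → F) (disj conj : F → F → F)
    (sat : V → F → Prop)
    (hA3 : assumpA3 sat neg disj conj) (hA1 : Finite V)
    (hA0 : modSet sat (Set.univ : Set F) = ∅)
    (rel : Set F → F → Prop) :
    (∃ μ : Set V → Set V,
        (∀ A ∈ defFam sat, μ A ⊆ A) ∧
        (∀ A ∈ defFam sat, ∀ B ∈ defFam sat, μ B ∩ A ⊆ μ A) ∧
        (∀ A ∈ defFam sat, A ∈ coFam sat neg → μ A ∈ coFam sat neg) ∧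
        Set.univ \ μ Set.univ ∈ defFam sat ∧
        (∀ (Γ : Set F) (α : F), rel Γ α ↔
          (μ (modSet sat Γ) ⊆ modSet sat {α} ∧
            ¬ μ (modSet sat Γ) ⊆ modSet sat {neg α}))) ↔
      (cond0 sat rel ∧ cond6 sat neg rel ∧ cond7 sat neg disj rel ∧
        cond8 sat neg rel ∧ cond10 sat neg rel ∧ cond11 sat neg rel ∧
        cond12 sat neg rel) := by

  haveI := hA1
  constructor
  · rintro ⟨μ, hsub, hSC, hCPμ, hUCμ, hrepr⟩
    have hu : modSet sat (∅ : Set F) = Set.univ := by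
      ext v; simp [modSet]
    have hudef : Set.univ ∈ defFam sat := ⟨∅, hu⟩
    set M := μ Set.univ with hMdef
    have hM : ∀ B : Set F, μ (modSet sat B) = modSet sat B ∩ M := by
      intro B
      apply subset_antisymm
      · exact Set.subset_inter (hsub _ ⟨B, rfl⟩)
          (fun v hv => hSC Set.univ hudef (modSet sat B) ⟨B, rfl⟩ ⟨hv, trivial⟩)
      · rintro v ⟨hvB, hvM⟩
        exact hSC (modSet sat B) ⟨B, rfl⟩ Set.univ hudef ⟨hvM, hvB⟩
    have hrel : Stmt13Aux.repr' sat neg rel M := by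
      intro Γ α
      rw [hrepr Γ α, hM Γ]
    have hCP' : ∀ B : Set F, modSet sat B ∈ coFam sat neg →
        modSet sat B ∩ M ∈ coFam sat neg := fun B h => hM B ▸ hCPμ _ ⟨B, rfl⟩ h
    have hUC' : ∃ Γ₀ : Set F, modSet sat Γ₀ = Set.univ \ M := by
      obtain ⟨Γ₀, h⟩ := hUCμ
      exact ⟨Γ₀, h⟩
    exact Stmt13Aux.forward_dir hA3 hA1 hA0 hrel hCP' hUC'
  · rintro ⟨h0, h6, h7, h8, h10, h11, h12⟩
    exact Stmt13Aux.backward_dir hA3 hA1 hA0 h6 h7 h8 h10 h11 h12
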